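/- There exists a well-defined group homomorphism ι_B from the Artin group A[B_{n+1}] to the Artin group A[A_{n+1}] sending r_i to s_i' for all 1 ≤ i ≤ n and r_{n+1} to (s_{n+1}')², i.e., the images satisfy all defining relations of A[B_{n+1}]. -/

import Mathlib

open FreeGroup in
/-- Defining relations of the Artin group of type `B m`: generators indexed by
`Fin m` (index `k` represents `r (k+1)`), with an order-4 braid relation between
the last two generators. -/
def ArtinBRels (m : ℕ) : Set (FreeGroup (Fin m)) :=
  {w | ∃ i j : Fin m,
    ((j : ℕ) = (i : ℕ) + 1 ∧ (j : ℕ) + 1 < m ∧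
      w = of i * of j * of i * (of j * of i * of j)⁻¹) ∨
    ((j : ℕ) = (i : ℕ) + 1 ∧ (j : ℕ) + 1 = m ∧
      w = of i * of j * of i * of j * (of j * of i * of j * of i)⁻¹) ∨
    ((i : ℕ) + 1 < (j : ℕ) ∧ w = of i * of j * (of j * of i)⁻¹)}

/-- The Artin group of type `B m`. -/
def ArtinB (m : ℕ) : Type := PresentedGroup (ArtinBRels m)

instance (m : ℕ) : Group (ArtinB m) :=
  inferInstanceAs (Group (PresentedGroup (ArtinBRels m)))

/-- The standard generator `r i` (1-based, so `1 ≤ i ≤ m`) of `A[B m]`. -/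
def rB (m : ℕ) (i : ℕ) : ArtinB m :=
  if h : i - 1 < m then PresentedGroup.of ⟨i - 1, h⟩ else 1

/-- `ρ_B = r₁ r₂ ⋯ r_{n+1}` in `A[B (n+1)]`. -/
def rhoB (n : ℕ) : ArtinB (n + 1) :=
  ((List.range (n + 1)).map (fun k => rB (n + 1) (k + 1))).prod

open FreeGroup in
/-- Defining relations of the Artin group of type `A n` (the braid group on
`n+1` strands): generators indexed by `Fin n` (index `k` represents `s (k+1)`). -/
def ArtinARels (n : ℕ) : Set (FreeGroup (Fin n)) :=
  {w | ∃ i j : Fin n,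
    ((j : ℕ) = (i : ℕ) + 1 ∧ w = of i * of j * of i * (of j * of i * of j)⁻¹) ∨
    ((i : ℕ) + 1 < (j : ℕ) ∧ w = of i * of j * (of j * of i)⁻¹)}

/-- The Artin group of type `A n`. -/
def ArtinA (n : ℕ) : Type := PresentedGroup (ArtinARels n)

instance (n : ℕ) : Group (ArtinA n) :=
  inferInstanceAs (Group (PresentedGroup (ArtinARels n)))

/-- The standard generator `s i` (1-based, so `1 ≤ i ≤ n`) of `A[A n]`. -/
def sA (n : ℕ) (i : ℕ) : ArtinA n :=
  if h : i - 1 < n then PresentedGroup.of ⟨i - 1, h⟩ else 1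

/-- The Garside element `Δ = (s₁⋯sₙ)(s₁⋯s_{n-1})⋯(s₁s₂)s₁` of `A[A n]`. -/
def deltaA (n : ℕ) : ArtinA n :=
  ((List.range n).reverse.map
    (fun k => ((List.range (k + 1)).map (fun i => sA n (i + 1))).prod)).prod

/-- Relators of `ArtinARels` become trivial in `ArtinA n`. -/
lemma relA_one {n : ℕ} {w : FreeGroup (Fin n)} (hw : w ∈ ArtinARels n) :
    (QuotientGroup.mk w : ArtinA n) = 1 := by
  rw [QuotientGroup.eq_one_iff]
  exact Subgroup.subset_normalClosure hw

lemma braidA {n : ℕ} (i j : Fin n) (h : (j : ℕ) = (i : ℕ) + 1) :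
    (PresentedGroup.of i : ArtinA n) * PresentedGroup.of j * PresentedGroup.of i =
      PresentedGroup.of j * PresentedGroup.of i * PresentedGroup.of j := by
  have := relA_one (n := n) ⟨i, j, Or.inl ⟨h, rfl⟩⟩
  rw [show (QuotientGroup.mk (FreeGroup.of i * FreeGroup.of j * FreeGroup.of i *
      (FreeGroup.of j * FreeGroup.of i * FreeGroup.of j)⁻¹) : ArtinA n) =
      (PresentedGroup.of i * PresentedGroup.of j * PresentedGroup.of i) *
      (PresentedGroup.of j * PresentedGroup.of i * PresentedGroup.of j)⁻¹ from rfl] at this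
  exact mul_inv_eq_one.mp this

lemma commA {n : ℕ} (i j : Fin n) (h : (i : ℕ) + 1 < (j : ℕ)) :
    (PresentedGroup.of i : ArtinA n) * PresentedGroup.of j =
      PresentedGroup.of j * PresentedGroup.of i := by
  have := relA_one (n := n) ⟨i, j, Or.inr ⟨h, rfl⟩⟩
  rw [show (QuotientGroup.mk (FreeGroup.of i * FreeGroup.of j *
      (FreeGroup.of j * FreeGroup.of i)⁻¹) : ArtinA n) =
      (PresentedGroup.of i * PresentedGroup.of j) *
      (PresentedGroup.of j * PresentedGroup.of i)⁻¹ from rfl] at this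
  exact mul_inv_eq_one.mp this

lemma order4 {G : Type*} [Group G] (a b : G) (h : a * b * a = b * a * b) :
    a * b ^ 2 * a * b ^ 2 = b ^ 2 * a * b ^ 2 * a := by
  have l1 : a * b ^ 2 * a * b ^ 2 = (b * a * b) * (b * a * b) := by
    calc a * b ^ 2 * a * b ^ 2 = a * b * (b * a * b) * b := by
          simp [pow_two, mul_assoc]
      _ = a * b * (a * b * a) * b := by rw [← h]
      _ = (a * b * a) * (b * a * b) := by simp [mul_assoc]
      _ = (b * a * b) * (b * a * b) := by rw [h]
  have l2 : b ^ 2 * a * b ^ 2 * a = (b * a * b) * (b * a * b) := by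
    calc b ^ 2 * a * b ^ 2 * a = b * (b * a * b) * b * a := by
          simp [pow_two, mul_assoc]
      _ = b * (a * b * a) * b * a := by rw [← h]
      _ = (b * a * b) * (a * b * a) := by simp [mul_assoc]
      _ = (b * a * b) * (b * a * b) := by rw [h]
  rw [l1, l2]

/-- The image of the `k`-th generator of `A[B (n+1)]` in `A[A (n+1)]`. -/
def fBtoA (n : ℕ) (k : Fin (n + 1)) : ArtinA (n + 1) :=
  if (k : ℕ) = n then (PresentedGroup.of k) ^ 2 else PresentedGroup.of k

lemma fBtoA_rels (n : ℕ) : ∀ r ∈ ArtinBRels (n + 1), FreeGroup.lift (fBtoA n) r = 1 := by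
  rintro r ⟨i, j, hc | hc | hc⟩
  · obtain ⟨hj, hjn, rfl⟩ := hc
    have hin : (i : ℕ) ≠ n := by omega
    have hjn' : (j : ℕ) ≠ n := by omega
    simp only [map_mul, map_inv, FreeGroup.lift_apply_of, fBtoA, hin, hjn', ↓reduceIte,
      mul_inv_eq_one]
    exact braidA i j hj
  · obtain ⟨hj, hjn, rfl⟩ := hc
    have hin : (i : ℕ) ≠ n := by omega
    have hjn' : (j : ℕ) = n := by omega
    simp only [map_mul, map_inv, FreeGroup.lift_apply_of, fBtoA, hin, hjn', ↓reduceIte,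
      mul_inv_eq_one]
    exact order4 _ _ (braidA i j hj)
  · obtain ⟨hij, rfl⟩ := hc
    have hin : (i : ℕ) ≠ n := by omega
    have hc := commA i j hij
    by_cases hjn : (j : ℕ) = n
    · simp only [map_mul, map_inv, FreeGroup.lift_apply_of, fBtoA, hin, hjn, ↓reduceIte,
        mul_inv_eq_one]
      have key : ∀ a b : ArtinA (n + 1), a * b = b * a → a * b ^ 2 = b ^ 2 * a := by
        intro a b h
        rw [pow_two, ← mul_assoc, h, mul_assoc, h, ← mul_assoc]
      exact key _ _ hc
    · simp only [map_mul, map_inv, FreeGroup.lift_apply_of, fBtoA, hin, hjn, ↓reduceIte,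
        mul_inv_eq_one]
      exact hc

theorem stmt5 (n : ℕ) :
    ∃ φ : ArtinB (n + 1) →* ArtinA (n + 1),
      (∀ i : ℕ, 1 ≤ i → i ≤ n → φ (rB (n + 1) i) = sA (n + 1) i) ∧
      φ (rB (n + 1) (n + 1)) = sA (n + 1) (n + 1) ^ 2 := by
  refine ⟨PresentedGroup.toGroup (fBtoA_rels n), ?_, ?_⟩
  · intro i h1 h2
    have hlt : i - 1 < n + 1 := by omega
    erw [rB, dif_pos hlt]
    erw [PresentedGroup.toGroup.of]
    erw [fBtoA, if_neg (by simp; omega), sA, dif_pos hlt]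
  · have hlt : n + 1 - 1 < n + 1 := by omega
    erw [rB, dif_pos hlt]
    erw [PresentedGroup.toGroup.of]
    erw [fBtoA, if_pos (by simp), sA, dif_pos hlt]
    rfl
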